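/- Consider system x_{k+1} = Ax_k + Bu_k with (A,B) controllable, and suppose data (u^d_{[0,N−1]}, x^d_{[0,N−1]}) generated by this system satisfy the fundamental lemma of order L+1 (any input-state trajectory of length L+1 is in the column span of the stacked Hankel matrices [H_{L+1}(u^d); H_{L+1}(x^d)]). Let K ∈ ℝ^{m×n} and define v^d_k = u^d_k − K x^d_k. Then any length-(L+1) sequence (v_{[k,k+L]}, x_{[k,k+L]}) is a trajectory of the pre-stabilized system x_{k+1} = (A + BK)x_k + Bv_k if and only if there exists α ∈ ℝ^{N−L} such that the stacked vector of the v- and x-sequences equals [H_{L+1}(u^d) − K̃ H_{L+1}(x^d); H_{L+1}(x^d)] α, where K̃ is the block-diagonal matrix with L+1 copies of K. -/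
import Mathlib


open Matrix Finset

lemma mulVec_sum_smul {n m N : ℕ} (K : Matrix (Fin m) (Fin n) ℝ)
    (α : Fin N → ℝ) (f : Fin N → Fin n → ℝ) :
    K.mulVec (∑ j, α j • f j) = ∑ j, α j • K.mulVec (f j) := by
  have : K.mulVec (∑ j, α j • f j) = K.mulVecLin (∑ j, α j • f j) := rfl
  rw [this, map_sum]
  simp [Matrix.mulVecLin]

/-- Pre-stabilized fundamental lemma: with the change of input
variable `v = u − Kx`, trajectories of `x⁺ = (A+BK)x + Bv` are exactly the linear
combinations of the columns of `[H(u^d) − K̃ H(x^d); H(x^d)]`. -/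
theorem prestabilized_fundamental_lemma {n m N L : ℕ}
    (A : Matrix (Fin n) (Fin n) ℝ) (B : Matrix (Fin n) (Fin m) ℝ)
    (K : Matrix (Fin m) (Fin n) ℝ)
    (hctrb : (Matrix.of fun (i : Fin n) (jp : Fin n × Fin m) =>
        (A ^ (jp.1 : ℕ) * B) i jp.2).rank = n)
    (ud : ℕ → Fin m → ℝ) (xd : ℕ → Fin n → ℝ)
    (hdata : ∀ k, k + 1 < N → xd (k + 1) = A.mulVec (xd k) + B.mulVec (ud k))
    -- the fundamental lemma of order L+1 holds for the data (u^d, x^d):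
    (hFL : ∀ (u : ℕ → Fin m → ℝ) (x : ℕ → Fin n → ℝ),
      (∀ l < L, x (l + 1) = A.mulVec (x l) + B.mulVec (u l)) ↔
      ∃ α : Fin (N - L) → ℝ, ∀ l ≤ L,
        u l = ∑ j : Fin (N - L), α j • ud (j.val + l) ∧
        x l = ∑ j : Fin (N - L), α j • xd (j.val + l))
    (vd : ℕ → Fin m → ℝ) (hvd : ∀ k, vd k = ud k - K.mulVec (xd k)) :
    ∀ (v : ℕ → Fin m → ℝ) (x : ℕ → Fin n → ℝ),
      (∀ l < L, x (l + 1) = (A + B * K).mulVec (x l) + B.mulVec (v l)) ↔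
      ∃ α : Fin (N - L) → ℝ, ∀ l ≤ L,
        v l = ∑ j : Fin (N - L), α j • vd (j.val + l) ∧
        x l = ∑ j : Fin (N - L), α j • xd (j.val + l) := by
  intro v x
  set u : ℕ → Fin m → ℝ := fun l => v l + K.mulVec (x l) with hu
  have hdyn : ∀ l, (A + B * K).mulVec (x l) + B.mulVec (v l)
      = A.mulVec (x l) + B.mulVec (u l) := by
    intro l
    simp only [hu, Matrix.add_mulVec, Matrix.mulVec_add, ← Matrix.mulVec_mulVec]
    abel
  constructor
  · intro h
    obtain ⟨α, hα⟩ := (hFL u x).mp (fun l hl => by rw [h l hl, hdyn])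
    refine ⟨α, fun l hl => ⟨?_, (hα l hl).2⟩⟩
    have hul := (hα l hl).1
    have hxl := (hα l hl).2
    have : v l = u l - K.mulVec (x l) := by simp [hu]
    rw [this, hul, hxl, mulVec_sum_smul, ← Finset.sum_sub_distrib]
    refine Finset.sum_congr rfl fun j _ => ?_
    rw [hvd, smul_sub]
  · intro ⟨α, hα⟩
    have hux : ∀ l ≤ L, u l = ∑ j : Fin (N - L), α j • ud (j.val + l) ∧
        x l = ∑ j : Fin (N - L), α j • xd (j.val + l) := by
      intro l hl
      refine ⟨?_, (hα l hl).2⟩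
      have : u l = v l + K.mulVec (x l) := rfl
      rw [this, (hα l hl).1, (hα l hl).2, mulVec_sum_smul, ← Finset.sum_add_distrib]
      refine Finset.sum_congr rfl fun j _ => ?_
      rw [hvd, smul_sub]
      abel
    have h := (hFL u x).mpr ⟨α, hux⟩
    intro l hl
    rw [hdyn, h l hl]
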